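/- For discrete random variables X, U on finite alphabets, deterministic functions f1, f2 of X, and reals p1, p2, λ with p̄1 = 1−p1, p̄2 = 1−p2, p̄1/p̄2 < λ ≤ 1 and p1 ≥ p2, the following holds: (λ·p̄2 − p̄1)·H(f2(X)|U) + (λ·p2 − p1)·H(f1(X)|U) ≤ (λ·p̄2 − p̄1)·H(f2(X)|f1(X)), with equality when U = f1(X). -/

import Mathlib

open Real

/-- Probability that discrete random variable `X` equals `x`, under weight function `p`. -/
noncomputable def pr {Ω α : Type*} [Fintype Ω] [DecidableEq α] (p : Ω → ℝ) (X : Ω → α) (x : α) : ℝ :=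
  ∑ ω, if X ω = x then p ω else 0

/-- Shannon entropy (natural log) of a discrete random variable `X`. -/
noncomputable def ent {Ω α : Type*} [Fintype Ω] [Fintype α] [DecidableEq α] (p : Ω → ℝ) (X : Ω → α) : ℝ :=
  ∑ x, Real.negMulLog (pr p X x)

/-- Conditional Shannon entropy `H(X|Y) = H(X,Y) - H(Y)`. -/
noncomputable def condEnt {Ω α β : Type*} [Fintype Ω] [Fintype α] [Fintype β] [DecidableEq α] [DecidableEq β]
    (p : Ω → ℝ) (X : Ω → α) (Y : Ω → β) : ℝ :=
  ent p (fun ω => (X ω, Y ω)) - ent p Y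

/-- Mutual information `I(X;Y) = H(X) + H(Y) - H(X,Y)`. -/
noncomputable def mi {Ω α β : Type*} [Fintype Ω] [Fintype α] [Fintype β] [DecidableEq α] [DecidableEq β]
    (p : Ω → ℝ) (X : Ω → α) (Y : Ω → β) : ℝ :=
  ent p X + ent p Y - ent p (fun ω => (X ω, Y ω))

/-- Conditional mutual information `I(X;Y|Z) = H(X|Z) + H(Y|Z) - H(X,Y|Z)`. -/
noncomputable def condMI {Ω α β γ : Type*} [Fintype Ω] [Fintype α] [Fintype β] [Fintype γ]
    [DecidableEq α] [DecidableEq β] [DecidableEq γ]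
    (p : Ω → ℝ) (X : Ω → α) (Y : Ω → β) (Z : Ω → γ) : ℝ :=
  condEnt p X Z + condEnt p Y Z - condEnt p (fun ω => (X ω, Y ω)) Z

/-- `p` is a probability mass function on the finite sample space `Ω`. -/
def IsProb {Ω : Type*} [Fintype Ω] (p : Ω → ℝ) : Prop :=
  (∀ ω, 0 ≤ p ω) ∧ ∑ ω, p ω = 1

set_option linter.unusedSectionVars false

/-- Pointwise log-sum style inequality used for submodularity. -/
lemma key_ineq (q a b c : ℝ) (hq : 0 ≤ q) (ha : q ≤ a) (hb : q ≤ b) (hc : a ≤ c)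
    (hb0 : 0 ≤ b) (hc0 : 0 ≤ c) :
    q - a * b / c ≤ q * log q + q * log c - q * log a - q * log b := by
  rcases eq_or_lt_of_le hq with hq0 | hq0
  · rw [← hq0]
    simp only [zero_mul, sub_zero, add_zero, zero_sub, neg_zero, zero_add]
    have : 0 ≤ a * b / c := div_nonneg (mul_nonneg (hq0 ▸ ha) hb0) hc0
    linarith
  · have ha0 : 0 < a := lt_of_lt_of_le hq0 ha
    have hb0' : 0 < b := lt_of_lt_of_le hq0 hb
    have hc0' : 0 < c := lt_of_lt_of_le ha0 hc
    set s := q * c / (a * b) with hs_def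
    have hs : 0 < s := by positivity
    have hlog : log s = log q + log c - log a - log b := by
      rw [hs_def, log_div (by positivity) (by positivity),
        log_mul (ne_of_gt hq0) (ne_of_gt hc0'), log_mul (ne_of_gt ha0) (ne_of_gt hb0')]
      ring
    have h4 : -log s ≤ s⁻¹ - 1 := by
      have := Real.log_le_sub_one_of_pos (inv_pos.mpr hs)
      rwa [Real.log_inv] at this
    have hqs : q * s⁻¹ = a * b / c := by
      rw [hs_def]
      field_simp
    have h5 : q * (1 - s⁻¹) ≤ q * log s := by
      have := mul_le_mul_of_nonneg_left h4 hq
      nlinarith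
    calc q - a * b / c = q * (1 - s⁻¹) := by rw [mul_sub, mul_one, hqs]
      _ ≤ q * log s := h5
      _ = q * log q + q * log c - q * log a - q * log b := by rw [hlog]; ring

/-- Abstract submodularity of Shannon entropy at the level of triple sums. -/
lemma sum_submod {α β γ : Type*} [Fintype α] [Fintype β] [Fintype γ]
    (q : α → β → γ → ℝ) (hq : ∀ x y z, 0 ≤ q x y z) :
    (∑ y : β, ∑ x : α, ∑ z : γ, negMulLog (q x y z)) + ∑ y : β, negMulLog (∑ x, ∑ z, q x y z)
      ≤ (∑ y : β, ∑ x : α, negMulLog (∑ z, q x y z))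
        + ∑ y : β, ∑ z : γ, negMulLog (∑ x, q x y z) := by
  rw [← Finset.sum_add_distrib, ← Finset.sum_add_distrib]
  refine Finset.sum_le_sum fun y _ => ?_
  have ha0 : ∀ x, 0 ≤ ∑ z, q x y z := fun x => Finset.sum_nonneg fun z _ => hq x y z
  have hb0 : ∀ z, 0 ≤ ∑ x, q x y z := fun z => Finset.sum_nonneg fun x _ => hq x y z
  have hC0 : 0 ≤ ∑ x, ∑ z, q x y z := Finset.sum_nonneg fun x _ => ha0 x
  have key : ∀ x z, q x y z - (∑ z', q x y z') * (∑ x', q x' y z) / (∑ x', ∑ z', q x' y z')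
      ≤ q x y z * log (q x y z) + q x y z * log (∑ x', ∑ z', q x' y z')
        - q x y z * log (∑ z', q x y z') - q x y z * log (∑ x', q x' y z) := by
    intro x z
    refine key_ineq _ _ _ _ (hq x y z) ?_ ?_ ?_ (hb0 z) hC0
    · exact Finset.single_le_sum (fun z' _ => hq x y z') (Finset.mem_univ z)
    · exact Finset.single_le_sum (fun x' _ => hq x' y z) (Finset.mem_univ x)
    · exact Finset.single_le_sum (fun x' _ => ha0 x') (Finset.mem_univ x)
  have hsum : ∑ x, ∑ z, (q x y z - (∑ z', q x y z') * (∑ x', q x' y z) / (∑ x', ∑ z', q x' y z'))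
      ≤ ∑ x, ∑ z, (q x y z * log (q x y z) + q x y z * log (∑ x', ∑ z', q x' y z')
        - q x y z * log (∑ z', q x y z') - q x y z * log (∑ x', q x' y z)) :=
    Finset.sum_le_sum fun x _ => Finset.sum_le_sum fun z _ => key x z
  have hzero : ∑ x, ∑ z,
      (q x y z - (∑ z', q x y z') * (∑ x', q x' y z) / (∑ x', ∑ z', q x' y z')) = 0 := by
    simp only [Finset.sum_sub_distrib]
    have hfac : ∑ x, ∑ z, ((∑ z', q x y z') * (∑ x', q x' y z) / (∑ x', ∑ z', q x' y z'))
        = (∑ x, ∑ z', q x y z') * (∑ z, ∑ x', q x' y z) / (∑ x', ∑ z', q x' y z') := by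
      simp only [← Finset.sum_div, ← Finset.mul_sum, ← Finset.sum_mul]
    rw [hfac, Finset.sum_comm (γ := γ)]
    rcases eq_or_ne (∑ x, ∑ z, q x y z) 0 with h | h
    · rw [h]; simp
    · field_simp
      ring
  have p1 : ∑ x, ∑ z, (q x y z * log (q x y z)) = -∑ x : α, ∑ z : γ, negMulLog (q x y z) := by
    simp [negMulLog, Finset.sum_neg_distrib]
  have p2 : ∑ x, ∑ z, (q x y z * log (∑ x', ∑ z', q x' y z'))
      = - negMulLog (∑ x, ∑ z, q x y z) := by
    simp only [← Finset.sum_mul]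
    simp [negMulLog]
  have p3 : ∑ x, ∑ z, (q x y z * log (∑ z', q x y z'))
      = - ∑ x, negMulLog (∑ z, q x y z) := by
    simp only [← Finset.sum_mul]
    simp [negMulLog, Finset.sum_neg_distrib]
  have p4 : ∑ x, ∑ z, (q x y z * log (∑ x', q x' y z))
      = - ∑ z, negMulLog (∑ x, q x y z) := by
    rw [Finset.sum_comm]
    simp only [← Finset.sum_mul]
    simp [negMulLog, Finset.sum_neg_distrib]
  have hexp : ∑ x, ∑ z, (q x y z * log (q x y z) + q x y z * log (∑ x', ∑ z', q x' y z')
        - q x y z * log (∑ z', q x y z') - q x y z * log (∑ x', q x' y z))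
      = (∑ x, negMulLog (∑ z, q x y z) + ∑ z, negMulLog (∑ x, q x y z))
        - ((∑ x : α, ∑ z : γ, negMulLog (q x y z)) + negMulLog (∑ x, ∑ z, q x y z)) := by
    simp only [Finset.sum_sub_distrib, Finset.sum_add_distrib, p1, p2, p3, p4]
    ring
  rw [hzero, hexp] at hsum
  linarith

section lemmas
variable {Ω α β γ : Type*} [Fintype Ω] [Fintype α] [Fintype β] [Fintype γ]
  [DecidableEq α] [DecidableEq β] [DecidableEq γ] (p : Ω → ℝ)

lemma pr_nonneg (hp : ∀ ω, 0 ≤ p ω) (X : Ω → α) (x : α) : 0 ≤ pr p X x := by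
  apply Finset.sum_nonneg; intro ω _; split <;> simp [hp ω]

lemma pr_comp_inj (Z : Ω → α) (e : α → β) (he : Function.Injective e) (a : α) :
    pr p (fun ω => e (Z ω)) (e a) = pr p Z a := by
  simp [pr, he.eq_iff]

lemma pr_comp_notin (Z : Ω → α) (e : α → β) (b : β) (hb : ∀ a, e a ≠ b) :
    pr p (fun ω => e (Z ω)) b = 0 := by
  simp [pr, hb]

lemma ent_comp_inj (Z : Ω → α) (e : α → β) (he : Function.Injective e) :
    ent p (fun ω => e (Z ω)) = ent p Z := by
  unfold ent
  rw [← Finset.sum_subset (Finset.subset_univ (Finset.univ.image e))]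
  · rw [Finset.sum_image (fun a _ a' _ h => he h)]
    simp [pr_comp_inj p Z e he]
  · intro b _ hb
    rw [pr_comp_notin p Z e b]
    · simp
    · intro a hae; exact hb (Finset.mem_image.mpr ⟨a, Finset.mem_univ a, hae⟩)

lemma pr_snd (X : Ω → α) (Y : Ω → β) (y : β) :
    pr p Y y = ∑ x, pr p (fun ω => (X ω, Y ω)) (x, y) := by
  unfold pr
  rw [Finset.sum_comm]
  refine Finset.sum_congr rfl fun ω _ => ?_
  simp [Prod.ext_iff, ite_and]

lemma negMulLog_sum_le {ι : Type*} (s : Finset ι) (f : ι → ℝ) (hf : ∀ i ∈ s, 0 ≤ f i) :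
    negMulLog (∑ i ∈ s, f i) ≤ ∑ i ∈ s, negMulLog (f i) := by
  rcases eq_or_lt_of_le (Finset.sum_nonneg hf) with h0 | h0
  · have : ∀ i ∈ s, f i = 0 := (Finset.sum_eq_zero_iff_of_nonneg hf).mp h0.symm
    rw [← h0, Finset.sum_congr rfl (fun i hi => by rw [this i hi])]
    simp [negMulLog]
  · rw [negMulLog, neg_mul, Finset.sum_mul, ← Finset.sum_neg_distrib]
    refine Finset.sum_le_sum fun i hi => ?_
    rcases eq_or_lt_of_le (hf i hi) with hfi | hfi
    · simp [← hfi, negMulLog]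
    · rw [negMulLog, neg_mul]
      have hle : f i ≤ ∑ j ∈ s, f j := Finset.single_le_sum hf hi
      have := Real.log_le_log hfi hle
      nlinarith

lemma ent_pair_ge (hp : ∀ ω, 0 ≤ p ω) (X : Ω → α) (Y : Ω → β) :
    ent p Y ≤ ent p (fun ω => (X ω, Y ω)) := by
  unfold ent
  rw [Fintype.sum_prod_type, Finset.sum_comm]
  refine Finset.sum_le_sum fun y _ => ?_
  rw [pr_snd p X Y y]
  exact negMulLog_sum_le _ _ (fun x _ => pr_nonneg p hp _ _)

lemma condEnt_nonneg (hp : ∀ ω, 0 ≤ p ω) (X : Ω → α) (Y : Ω → β) :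
    0 ≤ condEnt p X Y :=
  sub_nonneg.mpr (ent_pair_ge p hp X Y)

lemma ent_submod (hp : ∀ ω, 0 ≤ p ω) (A : Ω → α) (B : Ω → β) (C : Ω → γ) :
    ent p (fun ω => (A ω, B ω, C ω)) + ent p B
      ≤ ent p (fun ω => (A ω, B ω)) + ent p (fun ω => (B ω, C ω)) := by
  have key := sum_submod (fun x y z => pr p (fun ω => (A ω, B ω, C ω)) (x, y, z))
    (fun x y z => pr_nonneg p hp _ _)
  have E1 : ent p (fun ω => (A ω, B ω, C ω))
      = ∑ y : β, ∑ x : α, ∑ z : γ, negMulLog (pr p (fun ω => (A ω, B ω, C ω)) (x, y, z)) := by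
    unfold ent
    rw [Fintype.sum_prod_type]
    simp only [Fintype.sum_prod_type]
    exact Finset.sum_comm
  have E2 : ent p B = ∑ y : β, negMulLog (∑ x : α, ∑ z : γ,
      pr p (fun ω => (A ω, B ω, C ω)) (x, y, z)) := by
    unfold ent
    refine Finset.sum_congr rfl fun y _ => ?_
    congr 1
    unfold pr
    have step1 : (∑ ω, if B ω = y then p ω else 0)
        = ∑ ω, ∑ x : α, ∑ z : γ, (if (A ω, B ω, C ω) = (x, y, z) then p ω else 0) :=
      Finset.sum_congr rfl fun ω _ => by simp [Prod.ext_iff, ite_and]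
    rw [step1, Finset.sum_comm]
    exact Finset.sum_congr rfl fun x _ => Finset.sum_comm
  have E3 : ent p (fun ω => (A ω, B ω)) = ∑ y : β, ∑ x : α, negMulLog (∑ z : γ,
      pr p (fun ω => (A ω, B ω, C ω)) (x, y, z)) := by
    unfold ent
    rw [Fintype.sum_prod_type, Finset.sum_comm]
    refine Finset.sum_congr rfl fun y _ => Finset.sum_congr rfl fun x _ => ?_
    congr 1
    unfold pr
    rw [Finset.sum_comm]
    refine Finset.sum_congr rfl fun ω _ => ?_
    simp [Prod.ext_iff, ite_and]
  have E4 : ent p (fun ω => (B ω, C ω)) = ∑ y : β, ∑ z : γ, negMulLog (∑ x : α,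
      pr p (fun ω => (A ω, B ω, C ω)) (x, y, z)) := by
    unfold ent
    rw [Fintype.sum_prod_type]
    refine Finset.sum_congr rfl fun y _ => Finset.sum_congr rfl fun z _ => ?_
    congr 1
    unfold pr
    rw [Finset.sum_comm]
    refine Finset.sum_congr rfl fun ω _ => ?_
    simp [Prod.ext_iff, ite_and]
  rw [E1, E2, E3, E4]
  exact key

lemma condEnt_cond_pair_le (hp : ∀ ω, 0 ≤ p ω) (A : Ω → α) (B : Ω → β) (C : Ω → γ) :
    condEnt p A (fun ω => (B ω, C ω)) ≤ condEnt p A B := by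
  have h := ent_submod p hp A B C
  unfold condEnt
  simp only []
  linarith

lemma condEnt_chain (A : Ω → α) (B : Ω → β) (C : Ω → γ) :
    condEnt p A C - condEnt p B C
      = condEnt p A (fun ω => (B ω, C ω)) - condEnt p B (fun ω => (A ω, C ω)) := by
  have he : Function.Injective (fun t : α × β × γ => (t.2.1, t.1, t.2.2)) := by
    intro u v h
    simp only [Prod.ext_iff] at h ⊢
    exact ⟨h.2.1, h.1, h.2.2⟩
  have hswap : ent p (fun ω => (B ω, A ω, C ω)) = ent p (fun ω => (A ω, B ω, C ω)) :=
    ent_comp_inj p (fun ω => (A ω, B ω, C ω)) (fun t => (t.2.1, t.1, t.2.2)) he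
  unfold condEnt
  simp only []
  linarith

lemma condEnt_self (B : Ω → β) : condEnt p B B = 0 := by
  have : ent p (fun ω => (B ω, B ω)) = ent p B :=
    ent_comp_inj p B (fun y => (y, y)) (fun u v h => (Prod.ext_iff.mp h).1)
  unfold condEnt
  linarith

end lemmas

/-- if `p̄1/p̄2 < λ ≤ 1` and `p1 ≥ p2`, then
`(λ p̄2 − p̄1) H(f2(X)|U) + (λ p2 − p1) H(f1(X)|U) ≤ (λ p̄2 − p̄1) H(f2(X)|f1(X))`,
with equality when `U = f1(X)`. -/
theorem stmt1 {Ω 𝒳 𝒰 𝒴 : Type*} [Fintype Ω] [Fintype 𝒳] [Fintype 𝒰] [Fintype 𝒴]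
    [DecidableEq 𝒳] [DecidableEq 𝒰] [DecidableEq 𝒴]
    (p : Ω → ℝ) (hp : IsProb p) (X : Ω → 𝒳) (U : Ω → 𝒰) (f1 f2 : 𝒳 → 𝒴)
    (lam p1 p2 : ℝ) (hp1 : p1 ∈ Set.Icc (0:ℝ) 1) (hp2 : p2 ∈ Set.Icc (0:ℝ) 1)
    (hlamlb : (1 - p1) / (1 - p2) < lam) (hlam1 : lam ≤ 1) (h12 : p2 ≤ p1) :
    (lam * (1 - p2) - (1 - p1)) * condEnt p (fun ω => f2 (X ω)) U
      + (lam * p2 - p1) * condEnt p (fun ω => f1 (X ω)) U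
      ≤ (lam * (1 - p2) - (1 - p1)) * condEnt p (fun ω => f2 (X ω)) (fun ω => f1 (X ω))
    ∧ (lam * (1 - p2) - (1 - p1)) * condEnt p (fun ω => f2 (X ω)) (fun ω => f1 (X ω))
      + (lam * p2 - p1) * condEnt p (fun ω => f1 (X ω)) (fun ω => f1 (X ω))
      = (lam * (1 - p2) - (1 - p1)) * condEnt p (fun ω => f2 (X ω)) (fun ω => f1 (X ω)) := by
  obtain ⟨hp0, -⟩ := hp
  have ha : 0 ≤ lam * (1 - p2) - (1 - p1) := by
    rcases lt_or_eq_of_le hp2.2 with h | h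
    · have h' : 0 < 1 - p2 := by linarith
      have := (div_lt_iff₀ h').mp hlamlb
      linarith
    · have hp11 : p1 = 1 := le_antisymm hp1.2 (h ▸ h12)
      have h2 : (1:ℝ) - p2 = 0 := by linarith
      rw [h2, mul_zero, hp11]
      norm_num
  have h1 : 0 ≤ condEnt p (fun ω => f1 (X ω)) U := condEnt_nonneg p hp0 _ _
  have h2 : 0 ≤ condEnt p (fun ω => f1 (X ω)) (fun ω => (f2 (X ω), U ω)) :=
    condEnt_nonneg p hp0 _ _
  have h3 : condEnt p (fun ω => f2 (X ω)) (fun ω => (f1 (X ω), U ω))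
      ≤ condEnt p (fun ω => f2 (X ω)) (fun ω => f1 (X ω)) :=
    condEnt_cond_pair_le p hp0 _ _ _
  have h4 : condEnt p (fun ω => f2 (X ω)) U - condEnt p (fun ω => f1 (X ω)) U
      = condEnt p (fun ω => f2 (X ω)) (fun ω => (f1 (X ω), U ω))
        - condEnt p (fun ω => f1 (X ω)) (fun ω => (f2 (X ω), U ω)) :=
    condEnt_chain p _ _ _
  refine ⟨?_, ?_⟩
  · have key : (lam * (1 - p2) - (1 - p1))
        * (condEnt p (fun ω => f2 (X ω)) U - condEnt p (fun ω => f1 (X ω)) U)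
        ≤ (lam * (1 - p2) - (1 - p1))
          * condEnt p (fun ω => f2 (X ω)) (fun ω => f1 (X ω)) := by
      rw [h4]
      calc (lam * (1 - p2) - (1 - p1))
          * (condEnt p (fun ω => f2 (X ω)) (fun ω => (f1 (X ω), U ω))
            - condEnt p (fun ω => f1 (X ω)) (fun ω => (f2 (X ω), U ω)))
          ≤ (lam * (1 - p2) - (1 - p1))
            * condEnt p (fun ω => f2 (X ω)) (fun ω => (f1 (X ω), U ω)) := by
            nlinarith [mul_nonneg ha h2]
        _ ≤ _ := mul_le_mul_of_nonneg_left h3 ha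
    nlinarith [key, mul_nonneg (sub_nonneg.mpr hlam1) h1]
  · rw [condEnt_self]
    ring
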